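/- For every λ > 0 and every α with 0 < α < 1, the inequality ∑_{k=1}^∞ λ^{αk−1} · k^{1−α} / ((k−1)!)^α ≥ ∑_{k=0}^∞ λ^{αk} / (k!)^α holds. -/

import Mathlib

open Filter Real Topology

/-- For every `λ > 0` and `0 < α < 1`,
`∑_{k=1}^∞ λ^{αk−1} k^{1−α}/((k−1)!)^α ≥ ∑_{k=0}^∞ λ^{αk}/(k!)^α`
(the left-hand series is re-indexed by `k ↦ k+1`). -/
theorem poisson_byproduct_inequality_alpha_lt_one (l : ℝ) (hl : 0 < l)
    (α : ℝ) (hα : 0 < α) (hα1 : α < 1) :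
    (∑' k : ℕ, l ^ (α * ((k : ℝ) + 1) - 1) * ((k : ℝ) + 1) ^ (1 - α)
        / (Nat.factorial k : ℝ) ^ α)
      ≥ ∑' k : ℕ, l ^ (α * (k : ℝ)) / (Nat.factorial k : ℝ) ^ α := by
  set f : ℕ → ℝ := fun k => l ^ (α * (k : ℝ)) / (Nat.factorial k : ℝ) ^ α with hf_def
  set g : ℕ → ℝ := fun k =>
    l ^ (α * ((k : ℝ) + 1) - 1) * ((k : ℝ) + 1) ^ (1 - α) / (Nat.factorial k : ℝ) ^ α
    with hg_def
  have hfact : ∀ k : ℕ, (0 : ℝ) < (Nat.factorial k : ℝ) := fun k => by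
    exact_mod_cast Nat.factorial_pos k
  have hfpos : ∀ k, 0 < f k := fun k => by
    have := hfact k
    simp only [hf_def]
    positivity
  have hgpos : ∀ k, 0 < g k := fun k => by
    have := hfact k
    have : (0:ℝ) < (k:ℝ) + 1 := by positivity
    simp only [hg_def]
    positivity
  have hfact_succ : ∀ k : ℕ, (Nat.factorial (k+1) : ℝ) = ((k:ℝ)+1) * (Nat.factorial k : ℝ) := by
    intro k
    rw [Nat.factorial_succ]
    push_cast
    ring
  -- ratio recursion for f
  have hfr : ∀ k : ℕ, f (k+1) = f k * (l / ((k:ℝ)+1)) ^ α := by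
    intro k
    have hk1 : (0:ℝ) < (k:ℝ)+1 := by positivity
    simp only [hf_def]
    push_cast
    rw [hfact_succ k, Real.mul_rpow hk1.le (hfact k).le,
      Real.div_rpow hl.le hk1.le,
      show α * ((k:ℝ)+1) = α * (k:ℝ) + α by ring, Real.rpow_add hl]
    have h1 : ((k:ℝ)+1) ^ α ≠ 0 := by positivity
    have h2 : (Nat.factorial k : ℝ) ^ α ≠ 0 := by positivity
    field_simp
  -- summability of f, and of (k+1) * f k
  have hto : Tendsto (fun k : ℕ => ((k:ℝ)+1)) atTop atTop :=
    tendsto_atTop_add_const_right atTop 1 tendsto_natCast_atTop_atTop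
  have hratio0 : Tendsto (fun k : ℕ => (l / ((k:ℝ)+1)) ^ α) atTop (𝓝 0) := by
    have h0 : Tendsto (fun k : ℕ => l / ((k:ℝ)+1)) atTop (𝓝 0) :=
      tendsto_const_nhds.div_atTop hto
    have hc : ContinuousAt (fun x : ℝ => x ^ α) 0 :=
      Real.continuousAt_rpow_const 0 α (Or.inr hα.le)
    have := hc.tendsto.comp h0
    rwa [Real.zero_rpow hα.ne'] at this
  have hf_sum : Summable f := by
    apply summable_of_ratio_test_tendsto_lt_one (l := 0) one_pos
      (Eventually.of_forall fun n => (hfpos n).ne')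
    have : (fun n : ℕ => ‖f (n+1)‖ / ‖f n‖) = fun n : ℕ => (l / ((n:ℝ)+1)) ^ α := by
      funext n
      rw [Real.norm_of_nonneg (hfpos _).le, Real.norm_of_nonneg (hfpos _).le, hfr n,
        mul_comm, mul_div_assoc, div_self (hfpos n).ne', mul_one]
    rw [this]
    exact hratio0
  have he_pos : ∀ k : ℕ, 0 < ((k:ℝ)+1) * f k := fun k => by
    have := hfpos k; positivity
  have he_sum : Summable (fun k : ℕ => ((k:ℝ)+1) * f k) := by
    apply summable_of_ratio_test_tendsto_lt_one (l := 0) one_pos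
      (Eventually.of_forall fun n => (he_pos n).ne')
    have heq : (fun n : ℕ => ‖((n:ℝ)+1+1) * f (n+1)‖ / ‖((n:ℝ)+1) * f n‖)
        = fun n : ℕ => (((n:ℝ)+2)/((n:ℝ)+1)) * (l / ((n:ℝ)+1)) ^ α := by
      funext n
      have hn1 : (0:ℝ) < (n:ℝ)+1 := by positivity
      rw [Real.norm_of_nonneg (by positivity : (0:ℝ) ≤ ((n:ℝ)+1+1) * f (n+1)),
        Real.norm_of_nonneg (he_pos n).le, hfr n]
      field_simp
      rw [mul_div_assoc, div_self (hfpos n).ne', mul_one]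
      ring
    have h2 : Tendsto (fun n : ℕ => (((n:ℝ)+2)/((n:ℝ)+1)) * (l / ((n:ℝ)+1)) ^ α)
        atTop (𝓝 0) := by
      have hone : Tendsto (fun n : ℕ => ((n:ℝ)+2)/((n:ℝ)+1)) atTop (𝓝 1) := by
        have h0 : Tendsto (fun n : ℕ => 1 + 1/((n:ℝ)+1)) atTop (𝓝 (1 + 0)) :=
          tendsto_const_nhds.add (tendsto_const_nhds.div_atTop hto)
        rw [add_zero] at h0
        convert h0 using 2 with n
        have hn1 : ((n:ℝ)+1) ≠ 0 := by positivity
        field_simp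
        ring
      have := hone.mul hratio0
      rwa [mul_zero] at this
    simp only [Nat.cast_add, Nat.cast_one] at heq ⊢
    rw [heq]
    exact h2
  -- relation between g and f, and summability of g
  have hgf : ∀ k : ℕ, g k = (l ^ (α - 1) * ((k:ℝ)+1) ^ (1-α)) * f k := by
    intro k
    simp only [hg_def, hf_def]
    rw [show α * ((k:ℝ)+1) - 1 = α * (k:ℝ) + (α - 1) by ring, Real.rpow_add hl]
    ring
  have hg_sum : Summable g := by
    apply Summable.of_nonneg_of_le (fun k => (hgpos k).le)
      (f := fun k : ℕ => (l ^ (α-1)) * (((k:ℝ)+1) * f k))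
    · intro k
      rw [hgf k]
      have hb : ((k:ℝ)+1) ^ (1-α) ≤ ((k:ℝ)+1) := by
        nth_rewrite 2 [← Real.rpow_one ((k:ℝ)+1)]
        exact Real.rpow_le_rpow_of_exponent_le (by simp) (by linarith)
      have hlp : (0:ℝ) < l ^ (α-1) := Real.rpow_pos_of_pos hl _
      calc l ^ (α-1) * ((k:ℝ)+1) ^ (1-α) * f k
          ≤ l ^ (α-1) * ((k:ℝ)+1) * f k := by
            have := (hfpos k).le
            gcongr
        _ = l ^ (α-1) * (((k:ℝ)+1) * f k) := by ring
    · exact he_sum.mul_left _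
  -- key identity
  have hkey : ∀ k : ℕ, f k = g k ^ α * f (k+1) ^ (1-α) := by
    intro k
    have hk1 : (0:ℝ) < (k:ℝ)+1 := by positivity
    have hA : (0:ℝ) < g k ^ α * f (k+1) ^ (1-α) := by
      have := hgpos k; have := hfpos (k+1); positivity
    have hfk := hfact k
    have e1 : Real.log (f k) = α * (k:ℝ) * Real.log l - α * Real.log (Nat.factorial k : ℝ) := by
      simp only [hf_def]
      rw [Real.log_div (by positivity) (by positivity), Real.log_rpow hl,
        Real.log_rpow (hfact k)]
    have e2 : Real.log (g k) = (α * ((k:ℝ)+1) - 1) * Real.log l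
        + (1-α) * Real.log ((k:ℝ)+1) - α * Real.log (Nat.factorial k : ℝ) := by
      simp only [hg_def]
      rw [Real.log_div (by positivity) (by positivity),
        Real.log_mul (by positivity) (by positivity), Real.log_rpow hl,
        Real.log_rpow hk1, Real.log_rpow (hfact k)]
    have e3 : Real.log (f (k+1)) = α * ((k:ℝ)+1) * Real.log l
        - α * (Real.log ((k:ℝ)+1) + Real.log (Nat.factorial k : ℝ)) := by
      simp only [hf_def]
      push_cast
      rw [Real.log_div (by positivity) (by positivity), Real.log_rpow hl]
      rw [hfact_succ k, Real.mul_rpow hk1.le (hfact k).le,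
        Real.log_mul (by positivity) (by positivity), Real.log_rpow hk1,
        Real.log_rpow (hfact k)]
      ring
    rw [← Real.exp_log (hfpos k), ← Real.exp_log hA]
    congr 1
    rw [Real.log_mul (by positivity) (by positivity), Real.log_rpow (hgpos k),
      Real.log_rpow (hfpos (k+1)), e1, e2, e3]
    ring
  -- termwise AM-GM
  have hstep : ∀ k : ℕ, f k ≤ α * g k + (1-α) * f (k+1) := by
    intro k
    rw [hkey k]
    exact Real.geom_mean_le_arith_mean2_weighted hα.le (by linarith)
      (hgpos k).le (hfpos (k+1)).le (by ring)
  have hshift_sum : Summable (fun k : ℕ => f (k+1)) := by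
    exact_mod_cast (summable_nat_add_iff 1).2 hf_sum
  have hf0 : f 0 = 1 := by
    simp [hf_def, Nat.factorial]
  have hshift_tsum : ∑' k : ℕ, f (k+1) = (∑' k, f k) - 1 := by
    have h := hf_sum.tsum_eq_zero_add
    rw [hf0] at h
    linarith
  have hsum_le : ∑' k, f k ≤ ∑' k : ℕ, (α * g k + (1-α) * f (k+1)) :=
    Summable.tsum_le_tsum hstep hf_sum ((hg_sum.mul_left α).add (hshift_sum.mul_left (1-α)))
  rw [Summable.tsum_add (hg_sum.mul_left α) (hshift_sum.mul_left (1-α)), tsum_mul_left,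
    tsum_mul_left, hshift_tsum] at hsum_le
  set S := ∑' k, f k
  set L := ∑' k, g k
  show L ≥ S
  nlinarith [hsum_le, hα, hα1]
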